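/- Assume L ∈ ℝ^{n×n} satisfies L𝟙 = 0, 𝟙ᵀL = 0, and ker L = span{𝟙}; let 0 < μ ≤ L_f, x_opt ∈ ℝ, and let g_1, …, g_n : ℝ → ℝ satisfy Σᵢ g_i(x_opt) = 0 and the sector bound on (μ, L_f) about x_opt; let α ≠ 0, ζ ≠ 0, η ≠ 0 and δ ∈ ℝ. Then there exists exactly one fixed point (w1*, ŵ2*, x*, ŷ*, u*, v*) ∈ (ℝⁿ)⁶ of the projected dynamics G_m (i.e., w1* = w1* − αu* − ζv*, ŵ2* = (I − Π)(w1* + ŵ2* − v*), x* = w1* − v*, ŷ* = δw1* + ηŵ2*, u* = F(x*), v* = Lŷ*), and it satisfies x* = x_opt 𝟙, u* = F(x*), v* = −(α/ζ)u*, w1* = x* + v*, and ζη L ŵ2* = −α(I − δL)u* with Πŵ2* = 0. -/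

import Mathlib

open Matrix

/-- The all-ones vector 𝟙 ∈ ℝⁿ. -/
def onesVec (n : ℕ) : Fin n → ℝ := fun _ => 1

/-- The projection Π = (1/n)𝟙𝟙ᵀ onto the consensus subspace. -/
noncomputable def consensusProj (n : ℕ) : Matrix (Fin n) (Fin n) ℝ :=
  Matrix.of fun _ _ => (n : ℝ)⁻¹

/-- A tuple `(w1*, ŵ2*, x*, ŷ*, u*, v*)` is a fixed point of the projected
dynamics `G_m` with parameters `α, ζ, δ, η`. -/
def IsFixedGm {n : ℕ} (L : Matrix (Fin n) (Fin n) ℝ) (g : Fin n → ℝ → ℝ)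
    (α ζ δ η : ℝ)
    (p : (Fin n → ℝ) × (Fin n → ℝ) × (Fin n → ℝ) × (Fin n → ℝ) ×
      (Fin n → ℝ) × (Fin n → ℝ)) : Prop :=
  p.1 = p.1 - α • p.2.2.2.2.1 - ζ • p.2.2.2.2.2 ∧
  p.2.1 = (1 - consensusProj n) *ᵥ (p.1 + p.2.1 - p.2.2.2.2.2) ∧
  p.2.2.1 = p.1 - p.2.2.2.2.2 ∧
  p.2.2.2.1 = δ • p.1 + η • p.2.1 ∧
  p.2.2.2.2.1 = (fun i => g i (p.2.2.1 i)) ∧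
  p.2.2.2.2.2 = L *ᵥ p.2.2.2.1

lemma sum_mulVec_eq_zero {n : ℕ} (L : Matrix (Fin n) (Fin n) ℝ)
    (hL2 : onesVec n ᵥ* L = 0) (v : Fin n → ℝ) : ∑ i, (L *ᵥ v) i = 0 := by
  have h : ∀ j, ∑ i, L i j = 0 := by
    intro j
    have := congrFun hL2 j
    simpa [Matrix.vecMul, dotProduct, onesVec] using this
  simp only [Matrix.mulVec, dotProduct]
  rw [Finset.sum_comm]
  simp [← Finset.sum_mul, h]

lemma proj_mulVec {n : ℕ} (w : Fin n → ℝ) :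
    consensusProj n *ᵥ w = fun _ => (n : ℝ)⁻¹ * ∑ j, w j := by
  funext i
  simp [consensusProj, Matrix.mulVec, dotProduct, Finset.mul_sum]

lemma proj_const {n : ℕ} (hn : 1 ≤ n) (c : ℝ) :
    consensusProj n *ᵥ (fun _ => c) = fun _ => c := by
  rw [proj_mulVec]
  funext i
  have hn' : (n : ℝ) ≠ 0 := by positivity
  field_simp
  simp

lemma mulVec_const_zero {n : ℕ} (L : Matrix (Fin n) (Fin n) ℝ)
    (hL1 : L *ᵥ onesVec n = 0) (c : ℝ) : L *ᵥ (fun _ => c) = 0 := by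
  have : (fun _ : Fin n => c) = c • onesVec n := by funext i; simp [onesVec]
  rw [this, Matrix.mulVec_smul, hL1, smul_zero]

lemma exists_preimage {n : ℕ} (hn : 1 ≤ n) (L : Matrix (Fin n) (Fin n) ℝ)
    (hL2 : onesVec n ᵥ* L = 0)
    (hker : ∀ v : Fin n → ℝ, L *ᵥ v = 0 ↔ ∃ c : ℝ, v = fun _ => c)
    (z : Fin n → ℝ) (hz : ∑ i, z i = 0) : ∃ w, L *ᵥ w = z := by
  classical
  set f := Matrix.mulVecLin L with hf
  have hkerf : LinearMap.ker f = Submodule.span ℝ {onesVec n} := by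
    ext v
    simp only [LinearMap.mem_ker, hf, Matrix.mulVecLin_apply, Submodule.mem_span_singleton]
    rw [hker]
    constructor
    · rintro ⟨c, rfl⟩; exact ⟨c, by funext i; simp [onesVec]⟩
    · rintro ⟨c, rfl⟩; exact ⟨c, by funext i; simp [onesVec]⟩
  let φ : (Fin n → ℝ) →ₗ[ℝ] ℝ :=
    { toFun := fun y => ∑ i, y i
      map_add' := fun a b => by simp [Finset.sum_add_distrib]
      map_smul' := fun c a => by simp [Finset.mul_sum] }
  have hle : LinearMap.range f ≤ LinearMap.ker φ := by
    rintro y ⟨v, rfl⟩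
    simp only [LinearMap.mem_ker]
    show ∑ i, (L *ᵥ v) i = 0
    exact sum_mulVec_eq_zero L hL2 v
  have hones : onesVec n ≠ 0 := by
    intro h
    have := congrFun h ⟨0, hn⟩
    simp [onesVec] at this
  have hkf : Module.finrank ℝ (LinearMap.ker f) = 1 := by
    rw [hkerf, finrank_span_singleton hones]
  have hφsurj : Function.Surjective φ := by
    intro r
    refine ⟨fun _ => r / n, ?_⟩
    have hn' : (n : ℝ) ≠ 0 := by positivity
    show ∑ _i : Fin n, r / n = r
    rw [Finset.sum_const]
    simp [Finset.card_univ]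
    field_simp
  have h1 : Module.finrank ℝ (LinearMap.range f) + Module.finrank ℝ (LinearMap.ker f)
      = n := by
    rw [LinearMap.finrank_range_add_finrank_ker]
    simp
  have h2 : Module.finrank ℝ (LinearMap.range φ) + Module.finrank ℝ (LinearMap.ker φ)
      = n := by
    rw [LinearMap.finrank_range_add_finrank_ker]
    simp
  have hrφ : Module.finrank ℝ (LinearMap.range φ) = 1 := by
    rw [LinearMap.range_eq_top.mpr hφsurj]
    simp
  have heq : LinearMap.range f = LinearMap.ker φ :=
    Submodule.eq_of_le_of_finrank_eq hle (by omega)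
  have : z ∈ LinearMap.range f := by
    rw [heq]
    exact LinearMap.mem_ker.mpr hz
  obtain ⟨w, hw⟩ := this
  exact ⟨w, hw⟩

lemma sector_consensus {n : ℕ} (hn : 1 ≤ n) (μ Lf x_opt : ℝ) (hμ : 0 < μ) (hμL : μ ≤ Lf)
    (g : Fin n → ℝ → ℝ) (hopt : ∑ i, g i x_opt = 0)
    (hsec : ∀ i : Fin n, ∀ x : ℝ,
      -2 * μ * Lf * (x - x_opt) ^ 2
        + 2 * (Lf + μ) * (x - x_opt) * (g i x - g i x_opt)
        - 2 * (g i x - g i x_opt) ^ 2 ≥ 0)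
    (c : ℝ) (hc : ∑ i, g i c = 0) : c = x_opt := by
  set d := c - x_opt with hd
  have hsum0 : ∑ i, (g i c - g i x_opt) = 0 := by
    rw [Finset.sum_sub_distrib, hopt, hc]; ring
  have hS : (0:ℝ) ≤ ∑ i, (-2 * μ * Lf * d ^ 2
      + 2 * (Lf + μ) * d * (g i c - g i x_opt) - 2 * (g i c - g i x_opt) ^ 2) :=
    Finset.sum_nonneg fun i _ => (hsec i c)
  have hS2 : ∑ i, (-2 * μ * Lf * d ^ 2
      + 2 * (Lf + μ) * d * (g i c - g i x_opt) - 2 * (g i c - g i x_opt) ^ 2)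
      = (n : ℝ) * (-2 * μ * Lf * d ^ 2)
        + 2 * (Lf + μ) * d * (∑ i, (g i c - g i x_opt))
        - 2 * ∑ i, (g i c - g i x_opt) ^ 2 := by
    rw [Finset.sum_sub_distrib, Finset.sum_add_distrib, Finset.sum_const,
      ← Finset.mul_sum, ← Finset.mul_sum]
    simp [Finset.card_univ, nsmul_eq_mul]
  rw [hS2, hsum0] at hS
  have hsq : (0:ℝ) ≤ ∑ i, (g i c - g i x_opt) ^ 2 :=
    Finset.sum_nonneg fun i _ => sq_nonneg _
  have hn' : (1:ℝ) ≤ n := by exact_mod_cast hn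
  have hprod : 0 < μ * Lf := mul_pos hμ (hμ.trans_le hμL)
  have h3 : 0 ≤ ((n : ℝ) - 1) * (μ * Lf * d ^ 2) :=
    mul_nonneg (by linarith) (mul_nonneg hprod.le (sq_nonneg d))
  have hd2 : d ^ 2 ≤ 0 := by nlinarith
  have hd0 : d = 0 := by
    have := sq_nonneg d
    have : d ^ 2 = 0 := le_antisymm hd2 this
    exact pow_eq_zero_iff (by norm_num) |>.mp this
  have : c - x_opt = 0 := hd ▸ hd0
  linarith

lemma proj_idem {n : ℕ} (hn : 1 ≤ n) :
    consensusProj n * consensusProj n = consensusProj n := by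
  ext i j
  have hn' : (n : ℝ) ≠ 0 := by positivity
  simp [consensusProj, Matrix.mul_apply, Finset.sum_const, Finset.card_univ]
  field_simp

lemma fixed_props {n : ℕ} (hn : 1 ≤ n) (L : Matrix (Fin n) (Fin n) ℝ)
    (hL1 : L *ᵥ onesVec n = 0) (hL2 : onesVec n ᵥ* L = 0)
    (μ Lf x_opt : ℝ) (hμ : 0 < μ) (hμL : μ ≤ Lf)
    (g : Fin n → ℝ → ℝ) (hopt : ∑ i, g i x_opt = 0)
    (hsec : ∀ i : Fin n, ∀ x : ℝ,
      -2 * μ * Lf * (x - x_opt) ^ 2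
        + 2 * (Lf + μ) * (x - x_opt) * (g i x - g i x_opt)
        - 2 * (g i x - g i x_opt) ^ 2 ≥ 0)
    (α ζ δ η : ℝ) (hα : α ≠ 0) (hζ : ζ ≠ 0) (hη : η ≠ 0)
    (w1 w2 x y u v : Fin n → ℝ)
    (h : IsFixedGm L g α ζ δ η (w1, w2, x, y, u, v)) :
    x = (fun _ => x_opt) ∧
    u = (fun i => g i (x i)) ∧
    v = (-(α / ζ)) • u ∧
    w1 = x + v ∧
    (ζ * η) • (L *ᵥ w2) = (-α) • ((1 - δ • L) *ᵥ u) ∧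
    consensusProj n *ᵥ w2 = 0 := by
  obtain ⟨h1, h2, h3, h4, h5, h6⟩ := h
  dsimp only at h1 h2 h3 h4 h5 h6
  -- from eq 1 : ζ v = -α u
  have hζv : ζ • v = (-α) • u := by
    funext i
    have e := congrFun h1 i
    simp only [Pi.sub_apply, Pi.smul_apply, smul_eq_mul] at e ⊢
    linarith
  have hv : v = (-(α / ζ)) • u := by
    funext i
    have e := congrFun hζv i
    simp only [Pi.smul_apply, smul_eq_mul] at e ⊢
    field_simp
    linarith
  -- Π w2 = 0
  have hPi : consensusProj n *ᵥ w2 = 0 := by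
    have : consensusProj n *ᵥ w2
        = (consensusProj n * (1 - consensusProj n)) *ᵥ (w1 + w2 - v) := by
      conv_lhs => rw [h2]
      rw [Matrix.mulVec_mulVec]
    rw [this, Matrix.mul_sub, Matrix.mul_one, proj_idem hn, sub_self, Matrix.zero_mulVec]
  -- x = Π x, hence x is constant
  have h2' : w2 = (w1 + w2 - v) - consensusProj n *ᵥ (w1 + w2 - v) := by
    nth_rewrite 1 [h2]
    rw [Matrix.sub_mulVec, Matrix.one_mulVec]
  have hsplit : consensusProj n *ᵥ (w1 + w2 - v)
      = consensusProj n *ᵥ (w1 - v) + consensusProj n *ᵥ w2 := by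
    rw [← Matrix.mulVec_add]
    congr 1
    abel
  have hx : consensusProj n *ᵥ x = x := by
    rw [h3]
    rw [hsplit, hPi, add_zero] at h2'
    funext i
    have e := congrFun h2' i
    simp only [Pi.sub_apply, Pi.add_apply] at e ⊢
    linarith
  rw [proj_mulVec] at hx
  set c := (n : ℝ)⁻¹ * ∑ j, x j with hc
  have hxc : x = fun _ => c := hx.symm
  -- sums
  have hvsum : ∑ i, v i = 0 := by rw [h6]; exact sum_mulVec_eq_zero L hL2 y
  have husum : ∑ i, u i = 0 := by
    have e : ∑ i, (ζ • v) i = ∑ i, ((-α) • u) i := by rw [hζv]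
    simp only [Pi.smul_apply, smul_eq_mul, ← Finset.mul_sum, hvsum, mul_zero] at e
    rcases mul_eq_zero.mp e.symm with h | h
    · exact absurd h (neg_ne_zero.mpr hα)
    · exact h
  have hgc : ∑ i, g i c = 0 := by
    rw [h5] at husum
    simpa [hxc] using husum
  have hcx : c = x_opt := sector_consensus hn μ Lf x_opt hμ hμL g hopt hsec c hgc
  have hxopt : x = fun _ => x_opt := by rw [hxc, hcx]
  -- key equation for w2
  have hLx : L *ᵥ x = 0 := by rw [hxopt]; exact mulVec_const_zero L hL1 x_opt
  have hw1 : w1 = x + v := by rw [h3]; abel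
  have hζLw1 : ζ • (L *ᵥ w1) = (-α) • (L *ᵥ u) := by
    calc ζ • (L *ᵥ w1) = ζ • (L *ᵥ (x + v)) := by rw [← hw1]
      _ = ζ • (L *ᵥ v) := by rw [Matrix.mulVec_add, hLx, zero_add]
      _ = L *ᵥ (ζ • v) := by rw [Matrix.mulVec_smul]
      _ = L *ᵥ ((-α) • u) := by rw [hζv]
      _ = (-α) • (L *ᵥ u) := by rw [Matrix.mulVec_smul]
  have h6' : v = δ • (L *ᵥ w1) + η • (L *ᵥ w2) := by
    rw [h6, h4, Matrix.mulVec_add, Matrix.mulVec_smul, Matrix.mulVec_smul]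
  have hkey : (ζ * η) • (L *ᵥ w2) = (-α) • ((1 - δ • L) *ᵥ u) := by
    have hrw : (1 - δ • L) *ᵥ u = u - δ • (L *ᵥ u) := by
      rw [Matrix.sub_mulVec, Matrix.one_mulVec, Matrix.smul_mulVec]
    rw [hrw]
    funext i
    have hA := congrFun hζv i
    have hB := congrFun hζLw1 i
    have hC := congrFun h6' i
    simp only [Pi.smul_apply, Pi.sub_apply, Pi.add_apply, smul_eq_mul] at hA hB hC ⊢
    linear_combination hA - δ * hB - ζ * hC
  exact ⟨hxopt, h5, hv, hw1, hkey, hPi⟩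

/-- Under strong connectivity (`ker L = span{𝟙}`) the projected
dynamics `G_m` has exactly one fixed point, and it satisfies `x* = x_opt 𝟙`,
`u* = F(x*)`, `v* = −(α/ζ)u*`, `w1* = x* + v*`, `ζη L ŵ2* = −α(I − δL)u*`, `Πŵ2* = 0`. -/
theorem fixed_point_exists_unique {n : ℕ} (hn : 1 ≤ n) (L : Matrix (Fin n) (Fin n) ℝ)
    (hL1 : L *ᵥ onesVec n = 0) (hL2 : onesVec n ᵥ* L = 0)
    (hker : ∀ v : Fin n → ℝ, L *ᵥ v = 0 ↔ ∃ c : ℝ, v = fun _ => c)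
    (μ Lf x_opt : ℝ) (hμ : 0 < μ) (hμL : μ ≤ Lf)
    (g : Fin n → ℝ → ℝ)
    (hopt : ∑ i, g i x_opt = 0)
    (hsec : ∀ i : Fin n, ∀ x : ℝ,
      -2 * μ * Lf * (x - x_opt) ^ 2
        + 2 * (Lf + μ) * (x - x_opt) * (g i x - g i x_opt)
        - 2 * (g i x - g i x_opt) ^ 2 ≥ 0)
    (α ζ δ η : ℝ) (hα : α ≠ 0) (hζ : ζ ≠ 0) (hη : η ≠ 0) :
    (∃! p : (Fin n → ℝ) × (Fin n → ℝ) × (Fin n → ℝ) × (Fin n → ℝ) ×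
        (Fin n → ℝ) × (Fin n → ℝ), IsFixedGm L g α ζ δ η p) ∧
    (∀ w1s w2s xs ys us vs : Fin n → ℝ,
      IsFixedGm L g α ζ δ η (w1s, w2s, xs, ys, us, vs) →
        xs = (fun _ => x_opt) ∧
        us = (fun i => g i (xs i)) ∧
        vs = (-(α / ζ)) • us ∧
        w1s = xs + vs ∧
        (ζ * η) • (L *ᵥ w2s) = (-α) • ((1 - δ • L) *ᵥ us) ∧
        consensusProj n *ᵥ w2s = 0) := by
  have forward : ∀ w1s w2s xs ys us vs : Fin n → ℝ,
      IsFixedGm L g α ζ δ η (w1s, w2s, xs, ys, us, vs) →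
        xs = (fun _ => x_opt) ∧
        us = (fun i => g i (xs i)) ∧
        vs = (-(α / ζ)) • us ∧
        w1s = xs + vs ∧
        (ζ * η) • (L *ᵥ w2s) = (-α) • ((1 - δ • L) *ᵥ us) ∧
        consensusProj n *ᵥ w2s = 0 :=
    fun w1s w2s xs ys us vs h =>
      fixed_props hn L hL1 hL2 μ Lf x_opt hμ hμL g hopt hsec α ζ δ η hα hζ hη
        w1s w2s xs ys us vs h
  refine ⟨?_, forward⟩
  -- construction of the fixed point
  have hrwgen : ∀ w : Fin n → ℝ, (1 - δ • L) *ᵥ w = w - δ • (L *ᵥ w) := fun w => by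
    rw [Matrix.sub_mulVec, Matrix.one_mulVec, Matrix.smul_mulVec]
  have hLuo_sum : ∑ i, ((1 - δ • L) *ᵥ (fun i => g i x_opt)) i = 0 := by
    rw [hrwgen]
    simp only [Pi.sub_apply, Pi.smul_apply, smul_eq_mul]
    rw [Finset.sum_sub_distrib, ← Finset.mul_sum, hopt,
      sum_mulVec_eq_zero L hL2 (fun i => g i x_opt)]
    ring
  have hzsum : ∑ i, (((-α) / (ζ * η)) • ((1 - δ • L) *ᵥ (fun i => g i x_opt))) i = 0 := by
    simp only [Pi.smul_apply, smul_eq_mul, ← Finset.mul_sum, hLuo_sum, mul_zero]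
  obtain ⟨w, hw⟩ := exists_preimage hn L hL2 hker _ hzsum
  set u0 : Fin n → ℝ := fun i => g i x_opt with hu0
  set z : Fin n → ℝ := ((-α) / (ζ * η)) • ((1 - δ • L) *ᵥ u0) with hz
  set w20 : Fin n → ℝ := w - consensusProj n *ᵥ w with hw20
  have hLw20 : L *ᵥ w20 = z := by
    rw [hw20, Matrix.mulVec_sub, hw, proj_mulVec, mulVec_const_zero L hL1, sub_zero]
  have hPiw20 : consensusProj n *ᵥ w20 = 0 := by
    rw [hw20, Matrix.mulVec_sub, proj_mulVec w, proj_const hn, sub_self]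
  set x0 : Fin n → ℝ := fun _ => x_opt with hx0
  set v0 : Fin n → ℝ := (-(α / ζ)) • u0 with hv0
  set w10 : Fin n → ℝ := x0 + v0 with hw10
  set y0 : Fin n → ℝ := δ • w10 + η • w20 with hy0
  have hLx0 : L *ᵥ x0 = 0 := mulVec_const_zero L hL1 x_opt
  have hPix0 : consensusProj n *ᵥ x0 = x0 := proj_const hn x_opt
  have c1 : w10 = w10 - α • u0 - ζ • v0 := by
    funext i
    rw [hv0]
    simp only [Pi.sub_apply, Pi.smul_apply, smul_eq_mul]
    field_simp
    ring
  have c2 : w20 = (1 - consensusProj n) *ᵥ (w10 + w20 - v0) := by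
    rw [Matrix.sub_mulVec, Matrix.one_mulVec]
    have hs : w10 + w20 - v0 = x0 + w20 := by rw [hw10]; abel
    rw [hs, Matrix.mulVec_add, hPix0, hPiw20, add_zero]
    abel
  have c3 : x0 = w10 - v0 := by rw [hw10]; abel
  have c4 : y0 = δ • w10 + η • w20 := hy0
  have c5 : u0 = fun i => g i (x0 i) := by
    funext i
    simp only [hu0, hx0]
  have c6 : v0 = L *ᵥ y0 := by
    rw [hy0, Matrix.mulVec_add, Matrix.mulVec_smul, Matrix.mulVec_smul, hLw20,
      hw10, Matrix.mulVec_add, hLx0, zero_add, hv0, Matrix.mulVec_smul, hz, hrwgen]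
    funext i
    simp only [Pi.smul_apply, Pi.sub_apply, Pi.add_apply, smul_eq_mul]
    field_simp
    ring
  have hfix : IsFixedGm L g α ζ δ η (w10, w20, x0, y0, u0, v0) :=
    ⟨c1, c2, c3, c4, c5, c6⟩
  refine ⟨(w10, w20, x0, y0, u0, v0), hfix, ?_⟩
  rintro ⟨q1, q2, q3, q4, q5, q6⟩ hq
  obtain ⟨hxq, huq, hvq, hw1q, hkeyq, hPiq⟩ := forward q1 q2 q3 q4 q5 q6 hq
  obtain ⟨hx0', hu0', hv0', hw10', hkey0, hPi0⟩ := forward w10 w20 x0 y0 u0 v0 hfix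
  have e3 : q3 = x0 := by rw [hxq, hx0]
  have e5 : q5 = u0 := by rw [huq, e3, hx0, hu0]
  have e6 : q6 = v0 := by rw [hvq, e5, hv0]
  have e1 : q1 = w10 := by rw [hw1q, e3, e6, hw10]
  have e2 : q2 = w20 := by
    have hL : L *ᵥ q2 = L *ᵥ w20 := by
      refine smul_right_injective (Fin n → ℝ) (mul_ne_zero hζ hη) ?_
      show (ζ * η) • (L *ᵥ q2) = (ζ * η) • (L *ᵥ w20)
      rw [hkeyq, e5, ← hkey0]
    have hdiff : L *ᵥ (q2 - w20) = 0 := by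
      rw [Matrix.mulVec_sub, hL, sub_self]
    obtain ⟨cc, hcc⟩ := (hker _).mp hdiff
    have hPidiff : consensusProj n *ᵥ (q2 - w20) = 0 := by
      rw [Matrix.mulVec_sub, hPiq, hPiw20, sub_self]
    rw [hcc, proj_const hn] at hPidiff
    have hcc0 : cc = 0 := congrFun hPidiff ⟨0, hn⟩
    have : q2 - w20 = 0 := by rw [hcc, hcc0]; funext i; rfl
    exact sub_eq_zero.mp this
  have e4 : q4 = y0 := by
    obtain ⟨_, _, _, hq4, _, _⟩ := hq
    dsimp only at hq4
    rw [hq4, e1, e2, hy0]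
  simp only [Prod.mk.injEq]
  exact ⟨e1, e2, e3, e4, e5, e6⟩
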